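/- Let G and H be Hausdorff topological groups and let μ be a finite subgroup of G × H such that μ ∩ ({1} × H) = {(1,1)} and the image of μ in G is discrete in G. Then the map ι: H → (G × H)/μ, h ↦ (1,h)μ, is a topological group isomorphism onto its image; i.e., ι is an injective continuous homomorphism that is a homeomorphism onto its range. -/

import Mathlib

/-- Let `G`, `H` be Hausdorff topological groups and `μ` a finite subgroup of `G × H` with
`μ ∩ ({1} × H) = {1}` whose image in `G` is discrete.  Then `h ↦ (1, h)μ` is a topological
embedding of `H` into the coset space `(G × H)/μ`, i.e. an injective continuous map that is
a homeomorphism onto its image. -/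
theorem statement17 (G H : Type*) [Group G] [Group H]
    [TopologicalSpace G] [IsTopologicalGroup G] [T2Space G]
    [TopologicalSpace H] [IsTopologicalGroup H] [T2Space H]
    (μ : Subgroup (G × H)) [Finite μ]
    (htriv : ∀ h : H, ((1 : G), h) ∈ μ → h = 1)
    (hdisc : DiscreteTopology ↥(Prod.fst '' (μ : Set (G × H)))) :
    Topology.IsEmbedding (fun h : H => (QuotientGroup.mk ((1 : G), h) : (G × H) ⧸ μ)) := by
  set S : Set G := Prod.fst '' (μ : Set (G × H)) with hS
  have h1S : (1 : G) ∈ S := ⟨1, μ.one_mem, rfl⟩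
  set f : H → (G × H) ⧸ μ := fun h : H => (QuotientGroup.mk ((1 : G), h) : (G × H) ⧸ μ)
    with hf
  have hcont : Continuous f :=
    continuous_quot_mk.comp (Continuous.prodMk continuous_const continuous_id)
  have hinj : Function.Injective f := by
    intro a b hab
    have h2 := QuotientGroup.eq.mp hab
    have h3 : ((1 : G), a⁻¹ * b) ∈ μ := by
      simpa [Prod.ext_iff] using h2
    have h4 := htriv _ h3
    exact inv_mul_eq_one.mp h4
  obtain ⟨U, hUopen, hUeq⟩ : ∃ U : Set G, IsOpen U ∧
      ((↑) : S → G) ⁻¹' U = ({⟨1, h1S⟩} : Set S) :=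
    isOpen_induced_iff.mp (isOpen_discrete _)
  have h1U : (1 : G) ∈ U := by
    have : (⟨1, h1S⟩ : S) ∈ ((↑) : S → G) ⁻¹' U := by rw [hUeq]; rfl
    exact this
  have hUS : ∀ a ∈ U, a ∈ S → a = 1 := by
    intro a haU haS
    have : (⟨a, haS⟩ : S) ∈ ((↑) : S → G) ⁻¹' U := haU
    rw [hUeq] at this
    exact congrArg Subtype.val this
  refine ⟨⟨le_antisymm (continuous_iff_le_induced.mp hcont) ?_⟩, hinj⟩
  rw [TopologicalSpace.le_def]
  intro V hV
  rw [isOpen_induced_iff]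
  refine ⟨QuotientGroup.mk '' (U ×ˢ V), QuotientGroup.isOpenMap_coe _ (hUopen.prod hV), ?_⟩
  ext h
  simp only [Set.mem_preimage, Set.mem_image, hf]
  constructor
  · rintro ⟨⟨a, b⟩, hab, heq⟩
    obtain ⟨haU, hbV⟩ := hab
    have hmem : (((1 : G), h))⁻¹ * (a, b) ∈ μ := QuotientGroup.eq.mp heq.symm
    have hmem' : ((a : G), h⁻¹ * b) ∈ μ := by simpa using hmem
    have ha1 : a = 1 := hUS a haU ⟨_, hmem', rfl⟩
    rw [ha1] at hmem'
    have := htriv _ hmem'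
    have hb : b = h := by
      have := inv_mul_eq_one.mp this
      exact this.symm
    rwa [hb] at hbV
  · intro hhV
    exact ⟨((1 : G), h), ⟨h1U, hhV⟩, rfl⟩
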